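/- The kernel of B_3 over Q is 3-dimensional and is spanned by the three vectors (indexing columns by binary counting q_{000},q_{001},…,q_{111}): (0,0,1,−1,−1,1,0,0), (0,1,0,−1,−1,0,1,0), (1,0,0,−1,−1,0,0,1). -/
import Mathlib

def clawMatrix (n : ℕ) : Matrix (ZMod 2 × Fin (n + 1)) (Fin n → ZMod 2) ℚ :=
  fun p σ =>
    if h : (p.2 : ℕ) < n then (if p.1 = σ ⟨p.2, h⟩ then 1 else 0)
    else (if p.1 = ∑ i, σ i then 1 else 0)

/-- Interpret a tuple of `8` rational numbers as a vector indexed by the columns of `B₃`,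
ordered by binary counting `q₀₀₀, q₀₀₁, …, q₁₁₁`. -/
def vec (a : Fin 8 → ℚ) : (Fin 3 → ZMod 2) → ℚ := fun σ =>
  a ⟨4 * (σ 0).val + 2 * (σ 1).val + (σ 2).val, by
    have h0 := ZMod.val_lt (σ 0)
    have h1 := ZMod.val_lt (σ 1)
    have h2 := ZMod.val_lt (σ 2)
    omega⟩

lemma sum_expand (f : (Fin 3 → ZMod 2) → ℚ) :
    ∑ σ, f σ = f ![0,0,0] + f ![0,0,1] + f ![0,1,0] + f ![0,1,1]
      + f ![1,0,0] + f ![1,0,1] + f ![1,1,0] + f ![1,1,1] := by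
  rw [show (Finset.univ : Finset (Fin 3 → ZMod 2)) =
      {![0,0,0], ![0,0,1], ![0,1,0], ![0,1,1], ![1,0,0], ![1,0,1], ![1,1,0], ![1,1,1]} from by decide]
  rw [Finset.sum_insert (by decide), Finset.sum_insert (by decide), Finset.sum_insert (by decide),
    Finset.sum_insert (by decide), Finset.sum_insert (by decide), Finset.sum_insert (by decide),
    Finset.sum_insert (by decide), Finset.sum_singleton]
  ring

lemma row00 (v : (Fin 3 → ZMod 2) → ℚ) :
    ∑ σ, clawMatrix 3 (0, 0) σ * v σ = v ![0,0,0] + v ![0,0,1] + v ![0,1,0] + v ![0,1,1] := by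
  rw [sum_expand]
  rw [show clawMatrix 3 (0, 0) ![0,0,0] = 1 from by decide,
    show clawMatrix 3 (0, 0) ![0,0,1] = 1 from by decide,
    show clawMatrix 3 (0, 0) ![0,1,0] = 1 from by decide,
    show clawMatrix 3 (0, 0) ![0,1,1] = 1 from by decide,
    show clawMatrix 3 (0, 0) ![1,0,0] = 0 from by decide,
    show clawMatrix 3 (0, 0) ![1,0,1] = 0 from by decide,
    show clawMatrix 3 (0, 0) ![1,1,0] = 0 from by decide,
    show clawMatrix 3 (0, 0) ![1,1,1] = 0 from by decide]
  ring

lemma row01 (v : (Fin 3 → ZMod 2) → ℚ) :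
    ∑ σ, clawMatrix 3 (0, 1) σ * v σ = v ![0,0,0] + v ![0,0,1] + v ![1,0,0] + v ![1,0,1] := by
  rw [sum_expand]
  rw [show clawMatrix 3 (0, 1) ![0,0,0] = 1 from by decide,
    show clawMatrix 3 (0, 1) ![0,0,1] = 1 from by decide,
    show clawMatrix 3 (0, 1) ![0,1,0] = 0 from by decide,
    show clawMatrix 3 (0, 1) ![0,1,1] = 0 from by decide,
    show clawMatrix 3 (0, 1) ![1,0,0] = 1 from by decide,
    show clawMatrix 3 (0, 1) ![1,0,1] = 1 from by decide,
    show clawMatrix 3 (0, 1) ![1,1,0] = 0 from by decide,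
    show clawMatrix 3 (0, 1) ![1,1,1] = 0 from by decide]
  ring

lemma row02 (v : (Fin 3 → ZMod 2) → ℚ) :
    ∑ σ, clawMatrix 3 (0, 2) σ * v σ = v ![0,0,0] + v ![0,1,0] + v ![1,0,0] + v ![1,1,0] := by
  rw [sum_expand]
  rw [show clawMatrix 3 (0, 2) ![0,0,0] = 1 from by decide,
    show clawMatrix 3 (0, 2) ![0,0,1] = 0 from by decide,
    show clawMatrix 3 (0, 2) ![0,1,0] = 1 from by decide,
    show clawMatrix 3 (0, 2) ![0,1,1] = 0 from by decide,
    show clawMatrix 3 (0, 2) ![1,0,0] = 1 from by decide,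
    show clawMatrix 3 (0, 2) ![1,0,1] = 0 from by decide,
    show clawMatrix 3 (0, 2) ![1,1,0] = 1 from by decide,
    show clawMatrix 3 (0, 2) ![1,1,1] = 0 from by decide]
  ring

lemma row03 (v : (Fin 3 → ZMod 2) → ℚ) :
    ∑ σ, clawMatrix 3 (0, 3) σ * v σ = v ![0,0,0] + v ![0,1,1] + v ![1,0,1] + v ![1,1,0] := by
  rw [sum_expand]
  rw [show clawMatrix 3 (0, 3) ![0,0,0] = 1 from by decide,
    show clawMatrix 3 (0, 3) ![0,0,1] = 0 from by decide,
    show clawMatrix 3 (0, 3) ![0,1,0] = 0 from by decide,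
    show clawMatrix 3 (0, 3) ![0,1,1] = 1 from by decide,
    show clawMatrix 3 (0, 3) ![1,0,0] = 0 from by decide,
    show clawMatrix 3 (0, 3) ![1,0,1] = 1 from by decide,
    show clawMatrix 3 (0, 3) ![1,1,0] = 1 from by decide,
    show clawMatrix 3 (0, 3) ![1,1,1] = 0 from by decide]
  ring

lemma row10 (v : (Fin 3 → ZMod 2) → ℚ) :
    ∑ σ, clawMatrix 3 (1, 0) σ * v σ = v ![1,0,0] + v ![1,0,1] + v ![1,1,0] + v ![1,1,1] := by
  rw [sum_expand]
  rw [show clawMatrix 3 (1, 0) ![0,0,0] = 0 from by decide,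
    show clawMatrix 3 (1, 0) ![0,0,1] = 0 from by decide,
    show clawMatrix 3 (1, 0) ![0,1,0] = 0 from by decide,
    show clawMatrix 3 (1, 0) ![0,1,1] = 0 from by decide,
    show clawMatrix 3 (1, 0) ![1,0,0] = 1 from by decide,
    show clawMatrix 3 (1, 0) ![1,0,1] = 1 from by decide,
    show clawMatrix 3 (1, 0) ![1,1,0] = 1 from by decide,
    show clawMatrix 3 (1, 0) ![1,1,1] = 1 from by decide]
  ring

lemma row11 (v : (Fin 3 → ZMod 2) → ℚ) :
    ∑ σ, clawMatrix 3 (1, 1) σ * v σ = v ![0,1,0] + v ![0,1,1] + v ![1,1,0] + v ![1,1,1] := by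
  rw [sum_expand]
  rw [show clawMatrix 3 (1, 1) ![0,0,0] = 0 from by decide,
    show clawMatrix 3 (1, 1) ![0,0,1] = 0 from by decide,
    show clawMatrix 3 (1, 1) ![0,1,0] = 1 from by decide,
    show clawMatrix 3 (1, 1) ![0,1,1] = 1 from by decide,
    show clawMatrix 3 (1, 1) ![1,0,0] = 0 from by decide,
    show clawMatrix 3 (1, 1) ![1,0,1] = 0 from by decide,
    show clawMatrix 3 (1, 1) ![1,1,0] = 1 from by decide,
    show clawMatrix 3 (1, 1) ![1,1,1] = 1 from by decide]
  ring

lemma row12 (v : (Fin 3 → ZMod 2) → ℚ) :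
    ∑ σ, clawMatrix 3 (1, 2) σ * v σ = v ![0,0,1] + v ![0,1,1] + v ![1,0,1] + v ![1,1,1] := by
  rw [sum_expand]
  rw [show clawMatrix 3 (1, 2) ![0,0,0] = 0 from by decide,
    show clawMatrix 3 (1, 2) ![0,0,1] = 1 from by decide,
    show clawMatrix 3 (1, 2) ![0,1,0] = 0 from by decide,
    show clawMatrix 3 (1, 2) ![0,1,1] = 1 from by decide,
    show clawMatrix 3 (1, 2) ![1,0,0] = 0 from by decide,
    show clawMatrix 3 (1, 2) ![1,0,1] = 1 from by decide,
    show clawMatrix 3 (1, 2) ![1,1,0] = 0 from by decide,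
    show clawMatrix 3 (1, 2) ![1,1,1] = 1 from by decide]
  ring

lemma row13 (v : (Fin 3 → ZMod 2) → ℚ) :
    ∑ σ, clawMatrix 3 (1, 3) σ * v σ = v ![0,0,1] + v ![0,1,0] + v ![1,0,0] + v ![1,1,1] := by
  rw [sum_expand]
  rw [show clawMatrix 3 (1, 3) ![0,0,0] = 0 from by decide,
    show clawMatrix 3 (1, 3) ![0,0,1] = 1 from by decide,
    show clawMatrix 3 (1, 3) ![0,1,0] = 1 from by decide,
    show clawMatrix 3 (1, 3) ![0,1,1] = 0 from by decide,
    show clawMatrix 3 (1, 3) ![1,0,0] = 1 from by decide,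
    show clawMatrix 3 (1, 3) ![1,0,1] = 0 from by decide,
    show clawMatrix 3 (1, 3) ![1,1,0] = 0 from by decide,
    show clawMatrix 3 (1, 3) ![1,1,1] = 1 from by decide]
  ring

lemma val0_000 : vec ![0, 0, 1, -1, -1, 1, 0, 0] ![0,0,0] = 0 := by decide
lemma val0_001 : vec ![0, 0, 1, -1, -1, 1, 0, 0] ![0,0,1] = 0 := by decide
lemma val0_010 : vec ![0, 0, 1, -1, -1, 1, 0, 0] ![0,1,0] = 1 := by decide
lemma val0_011 : vec ![0, 0, 1, -1, -1, 1, 0, 0] ![0,1,1] = -1 := by decide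
lemma val0_100 : vec ![0, 0, 1, -1, -1, 1, 0, 0] ![1,0,0] = -1 := by decide
lemma val0_101 : vec ![0, 0, 1, -1, -1, 1, 0, 0] ![1,0,1] = 1 := by decide
lemma val0_110 : vec ![0, 0, 1, -1, -1, 1, 0, 0] ![1,1,0] = 0 := by decide
lemma val0_111 : vec ![0, 0, 1, -1, -1, 1, 0, 0] ![1,1,1] = 0 := by decide

lemma val1_000 : vec ![0, 1, 0, -1, -1, 0, 1, 0] ![0,0,0] = 0 := by decide
lemma val1_001 : vec ![0, 1, 0, -1, -1, 0, 1, 0] ![0,0,1] = 1 := by decide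
lemma val1_010 : vec ![0, 1, 0, -1, -1, 0, 1, 0] ![0,1,0] = 0 := by decide
lemma val1_011 : vec ![0, 1, 0, -1, -1, 0, 1, 0] ![0,1,1] = -1 := by decide
lemma val1_100 : vec ![0, 1, 0, -1, -1, 0, 1, 0] ![1,0,0] = -1 := by decide
lemma val1_101 : vec ![0, 1, 0, -1, -1, 0, 1, 0] ![1,0,1] = 0 := by decide
lemma val1_110 : vec ![0, 1, 0, -1, -1, 0, 1, 0] ![1,1,0] = 1 := by decide
lemma val1_111 : vec ![0, 1, 0, -1, -1, 0, 1, 0] ![1,1,1] = 0 := by decide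

lemma val2_000 : vec ![1, 0, 0, -1, -1, 0, 0, 1] ![0,0,0] = 1 := by decide
lemma val2_001 : vec ![1, 0, 0, -1, -1, 0, 0, 1] ![0,0,1] = 0 := by decide
lemma val2_010 : vec ![1, 0, 0, -1, -1, 0, 0, 1] ![0,1,0] = 0 := by decide
lemma val2_011 : vec ![1, 0, 0, -1, -1, 0, 0, 1] ![0,1,1] = -1 := by decide
lemma val2_100 : vec ![1, 0, 0, -1, -1, 0, 0, 1] ![1,0,0] = -1 := by decide
lemma val2_101 : vec ![1, 0, 0, -1, -1, 0, 0, 1] ![1,0,1] = 0 := by decide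
lemma val2_110 : vec ![1, 0, 0, -1, -1, 0, 0, 1] ![1,1,0] = 0 := by decide
lemma val2_111 : vec ![1, 0, 0, -1, -1, 0, 0, 1] ![1,1,1] = 1 := by decide

lemma genker0 : (clawMatrix 3).mulVec (vec ![0, 0, 1, -1, -1, 1, 0, 0]) = 0 := by
  have e00 : ∑ σ, clawMatrix 3 ((0 : ZMod 2), (0 : Fin 4)) σ * vec ![0, 0, 1, -1, -1, 1, 0, 0] σ = 0 := by
    rw [row00]
    simp only [val0_000, val0_001, val0_010, val0_011, val0_100, val0_101, val0_110, val0_111]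
    norm_num
  have e01 : ∑ σ, clawMatrix 3 ((0 : ZMod 2), (1 : Fin 4)) σ * vec ![0, 0, 1, -1, -1, 1, 0, 0] σ = 0 := by
    rw [row01]
    simp only [val0_000, val0_001, val0_010, val0_011, val0_100, val0_101, val0_110, val0_111]
    norm_num
  have e02 : ∑ σ, clawMatrix 3 ((0 : ZMod 2), (2 : Fin 4)) σ * vec ![0, 0, 1, -1, -1, 1, 0, 0] σ = 0 := by
    rw [row02]
    simp only [val0_000, val0_001, val0_010, val0_011, val0_100, val0_101, val0_110, val0_111]
    norm_num
  have e03 : ∑ σ, clawMatrix 3 ((0 : ZMod 2), (3 : Fin 4)) σ * vec ![0, 0, 1, -1, -1, 1, 0, 0] σ = 0 := by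
    rw [row03]
    simp only [val0_000, val0_001, val0_010, val0_011, val0_100, val0_101, val0_110, val0_111]
    norm_num
  have e10 : ∑ σ, clawMatrix 3 ((1 : ZMod 2), (0 : Fin 4)) σ * vec ![0, 0, 1, -1, -1, 1, 0, 0] σ = 0 := by
    rw [row10]
    simp only [val0_000, val0_001, val0_010, val0_011, val0_100, val0_101, val0_110, val0_111]
    norm_num
  have e11 : ∑ σ, clawMatrix 3 ((1 : ZMod 2), (1 : Fin 4)) σ * vec ![0, 0, 1, -1, -1, 1, 0, 0] σ = 0 := by
    rw [row11]
    simp only [val0_000, val0_001, val0_010, val0_011, val0_100, val0_101, val0_110, val0_111]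
    norm_num
  have e12 : ∑ σ, clawMatrix 3 ((1 : ZMod 2), (2 : Fin 4)) σ * vec ![0, 0, 1, -1, -1, 1, 0, 0] σ = 0 := by
    rw [row12]
    simp only [val0_000, val0_001, val0_010, val0_011, val0_100, val0_101, val0_110, val0_111]
    norm_num
  have e13 : ∑ σ, clawMatrix 3 ((1 : ZMod 2), (3 : Fin 4)) σ * vec ![0, 0, 1, -1, -1, 1, 0, 0] σ = 0 := by
    rw [row13]
    simp only [val0_000, val0_001, val0_010, val0_011, val0_100, val0_101, val0_110, val0_111]
    norm_num
  funext r
  obtain ⟨g, i⟩ := r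
  fin_cases g <;> fin_cases i
  exacts [e00, e01, e02, e03, e10, e11, e12, e13]

lemma genker1 : (clawMatrix 3).mulVec (vec ![0, 1, 0, -1, -1, 0, 1, 0]) = 0 := by
  have e00 : ∑ σ, clawMatrix 3 ((0 : ZMod 2), (0 : Fin 4)) σ * vec ![0, 1, 0, -1, -1, 0, 1, 0] σ = 0 := by
    rw [row00]
    simp only [val1_000, val1_001, val1_010, val1_011, val1_100, val1_101, val1_110, val1_111]
    norm_num
  have e01 : ∑ σ, clawMatrix 3 ((0 : ZMod 2), (1 : Fin 4)) σ * vec ![0, 1, 0, -1, -1, 0, 1, 0] σ = 0 := by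
    rw [row01]
    simp only [val1_000, val1_001, val1_010, val1_011, val1_100, val1_101, val1_110, val1_111]
    norm_num
  have e02 : ∑ σ, clawMatrix 3 ((0 : ZMod 2), (2 : Fin 4)) σ * vec ![0, 1, 0, -1, -1, 0, 1, 0] σ = 0 := by
    rw [row02]
    simp only [val1_000, val1_001, val1_010, val1_011, val1_100, val1_101, val1_110, val1_111]
    norm_num
  have e03 : ∑ σ, clawMatrix 3 ((0 : ZMod 2), (3 : Fin 4)) σ * vec ![0, 1, 0, -1, -1, 0, 1, 0] σ = 0 := by
    rw [row03]
    simp only [val1_000, val1_001, val1_010, val1_011, val1_100, val1_101, val1_110, val1_111]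
    norm_num
  have e10 : ∑ σ, clawMatrix 3 ((1 : ZMod 2), (0 : Fin 4)) σ * vec ![0, 1, 0, -1, -1, 0, 1, 0] σ = 0 := by
    rw [row10]
    simp only [val1_000, val1_001, val1_010, val1_011, val1_100, val1_101, val1_110, val1_111]
    norm_num
  have e11 : ∑ σ, clawMatrix 3 ((1 : ZMod 2), (1 : Fin 4)) σ * vec ![0, 1, 0, -1, -1, 0, 1, 0] σ = 0 := by
    rw [row11]
    simp only [val1_000, val1_001, val1_010, val1_011, val1_100, val1_101, val1_110, val1_111]
    norm_num
  have e12 : ∑ σ, clawMatrix 3 ((1 : ZMod 2), (2 : Fin 4)) σ * vec ![0, 1, 0, -1, -1, 0, 1, 0] σ = 0 := by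
    rw [row12]
    simp only [val1_000, val1_001, val1_010, val1_011, val1_100, val1_101, val1_110, val1_111]
    norm_num
  have e13 : ∑ σ, clawMatrix 3 ((1 : ZMod 2), (3 : Fin 4)) σ * vec ![0, 1, 0, -1, -1, 0, 1, 0] σ = 0 := by
    rw [row13]
    simp only [val1_000, val1_001, val1_010, val1_011, val1_100, val1_101, val1_110, val1_111]
    norm_num
  funext r
  obtain ⟨g, i⟩ := r
  fin_cases g <;> fin_cases i
  exacts [e00, e01, e02, e03, e10, e11, e12, e13]

lemma genker2 : (clawMatrix 3).mulVec (vec ![1, 0, 0, -1, -1, 0, 0, 1]) = 0 := by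
  have e00 : ∑ σ, clawMatrix 3 ((0 : ZMod 2), (0 : Fin 4)) σ * vec ![1, 0, 0, -1, -1, 0, 0, 1] σ = 0 := by
    rw [row00]
    simp only [val2_000, val2_001, val2_010, val2_011, val2_100, val2_101, val2_110, val2_111]
    norm_num
  have e01 : ∑ σ, clawMatrix 3 ((0 : ZMod 2), (1 : Fin 4)) σ * vec ![1, 0, 0, -1, -1, 0, 0, 1] σ = 0 := by
    rw [row01]
    simp only [val2_000, val2_001, val2_010, val2_011, val2_100, val2_101, val2_110, val2_111]
    norm_num
  have e02 : ∑ σ, clawMatrix 3 ((0 : ZMod 2), (2 : Fin 4)) σ * vec ![1, 0, 0, -1, -1, 0, 0, 1] σ = 0 := by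
    rw [row02]
    simp only [val2_000, val2_001, val2_010, val2_011, val2_100, val2_101, val2_110, val2_111]
    norm_num
  have e03 : ∑ σ, clawMatrix 3 ((0 : ZMod 2), (3 : Fin 4)) σ * vec ![1, 0, 0, -1, -1, 0, 0, 1] σ = 0 := by
    rw [row03]
    simp only [val2_000, val2_001, val2_010, val2_011, val2_100, val2_101, val2_110, val2_111]
    norm_num
  have e10 : ∑ σ, clawMatrix 3 ((1 : ZMod 2), (0 : Fin 4)) σ * vec ![1, 0, 0, -1, -1, 0, 0, 1] σ = 0 := by
    rw [row10]
    simp only [val2_000, val2_001, val2_010, val2_011, val2_100, val2_101, val2_110, val2_111]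
    norm_num
  have e11 : ∑ σ, clawMatrix 3 ((1 : ZMod 2), (1 : Fin 4)) σ * vec ![1, 0, 0, -1, -1, 0, 0, 1] σ = 0 := by
    rw [row11]
    simp only [val2_000, val2_001, val2_010, val2_011, val2_100, val2_101, val2_110, val2_111]
    norm_num
  have e12 : ∑ σ, clawMatrix 3 ((1 : ZMod 2), (2 : Fin 4)) σ * vec ![1, 0, 0, -1, -1, 0, 0, 1] σ = 0 := by
    rw [row12]
    simp only [val2_000, val2_001, val2_010, val2_011, val2_100, val2_101, val2_110, val2_111]
    norm_num
  have e13 : ∑ σ, clawMatrix 3 ((1 : ZMod 2), (3 : Fin 4)) σ * vec ![1, 0, 0, -1, -1, 0, 0, 1] σ = 0 := by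
    rw [row13]
    simp only [val2_000, val2_001, val2_010, val2_011, val2_100, val2_101, val2_110, val2_111]
    norm_num
  funext r
  obtain ⟨g, i⟩ := r
  fin_cases g <;> fin_cases i
  exacts [e00, e01, e02, e03, e10, e11, e12, e13]


lemma sigma_cases : ∀ σ : Fin 3 → ZMod 2,
    σ = ![0,0,0] ∨ σ = ![0,0,1] ∨ σ = ![0,1,0] ∨ σ = ![0,1,1] ∨
    σ = ![1,0,0] ∨ σ = ![1,0,1] ∨ σ = ![1,1,0] ∨ σ = ![1,1,1] := by decide

lemma ker_le_span : LinearMap.ker (clawMatrix 3).mulVecLin ≤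
    Submodule.span ℚ {vec ![0, 0, 1, -1, -1, 1, 0, 0], vec ![0, 1, 0, -1, -1, 0, 1, 0], vec ![1, 0, 0, -1, -1, 0, 0, 1]} := by
  intro v hv
  have hv' : (clawMatrix 3).mulVec v = 0 := hv
  have h00 : ∑ σ, clawMatrix 3 ((0 : ZMod 2), (0 : Fin 4)) σ * v σ = 0 := congrFun hv' ((0 : ZMod 2), (0 : Fin 4))
  rw [row00] at h00
  have h01 : ∑ σ, clawMatrix 3 ((0 : ZMod 2), (1 : Fin 4)) σ * v σ = 0 := congrFun hv' ((0 : ZMod 2), (1 : Fin 4))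
  rw [row01] at h01
  have h02 : ∑ σ, clawMatrix 3 ((0 : ZMod 2), (2 : Fin 4)) σ * v σ = 0 := congrFun hv' ((0 : ZMod 2), (2 : Fin 4))
  rw [row02] at h02
  have h03 : ∑ σ, clawMatrix 3 ((0 : ZMod 2), (3 : Fin 4)) σ * v σ = 0 := congrFun hv' ((0 : ZMod 2), (3 : Fin 4))
  rw [row03] at h03
  have h10 : ∑ σ, clawMatrix 3 ((1 : ZMod 2), (0 : Fin 4)) σ * v σ = 0 := congrFun hv' ((1 : ZMod 2), (0 : Fin 4))
  rw [row10] at h10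
  have h11 : ∑ σ, clawMatrix 3 ((1 : ZMod 2), (1 : Fin 4)) σ * v σ = 0 := congrFun hv' ((1 : ZMod 2), (1 : Fin 4))
  rw [row11] at h11
  have h12 : ∑ σ, clawMatrix 3 ((1 : ZMod 2), (2 : Fin 4)) σ * v σ = 0 := congrFun hv' ((1 : ZMod 2), (2 : Fin 4))
  rw [row12] at h12
  have h13 : ∑ σ, clawMatrix 3 ((1 : ZMod 2), (3 : Fin 4)) σ * v σ = 0 := congrFun hv' ((1 : ZMod 2), (3 : Fin 4))
  rw [row13] at h13
  have hrep : v = v ![0,1,0] • vec ![0, 0, 1, -1, -1, 1, 0, 0] + v ![0,0,1] • vec ![0, 1, 0, -1, -1, 0, 1, 0] + v ![0,0,0] • vec ![1, 0, 0, -1, -1, 0, 0, 1] := by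
    funext σ
    rcases sigma_cases σ with rfl|rfl|rfl|rfl|rfl|rfl|rfl|rfl <;>
      · simp only [Pi.add_apply, Pi.smul_apply, smul_eq_mul, val0_000, val0_001, val0_010, val0_011, val0_100, val0_101, val0_110, val0_111, val1_000, val1_001, val1_010, val1_011, val1_100, val1_101, val1_110, val1_111, val2_000, val2_001, val2_010, val2_011, val2_100, val2_101, val2_110, val2_111]
        linarith [h00, h01, h02, h03, h10, h11, h12, h13]
  rw [hrep]
  refine Submodule.add_mem _ (Submodule.add_mem _ ?_ ?_) ?_ <;>
    exact Submodule.smul_mem _ _ (Submodule.subset_span (by simp))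

lemma span_le_ker : Submodule.span ℚ {vec ![0, 0, 1, -1, -1, 1, 0, 0], vec ![0, 1, 0, -1, -1, 0, 1, 0], vec ![1, 0, 0, -1, -1, 0, 0, 1]} ≤
    LinearMap.ker (clawMatrix 3).mulVecLin := by
  rw [Submodule.span_le]
  intro x hx
  simp only [Set.mem_insert_iff, Set.mem_singleton_iff] at hx
  rcases hx with rfl | rfl | rfl <;>
    rw [SetLike.mem_coe, LinearMap.mem_ker, Matrix.mulVecLin_apply]
  exacts [genker0, genker1, genker2]

lemma gens_li : LinearIndependent ℚ ![vec ![0, 0, 1, -1, -1, 1, 0, 0], vec ![0, 1, 0, -1, -1, 0, 1, 0], vec ![1, 0, 0, -1, -1, 0, 0, 1]] := by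
  rw [Fintype.linearIndependent_iff]
  intro c hc
  rw [Fin.sum_univ_three] at hc
  rw [show (![vec ![0, 0, 1, -1, -1, 1, 0, 0], vec ![0, 1, 0, -1, -1, 0, 1, 0], vec ![1, 0, 0, -1, -1, 0, 0, 1]] :
    Fin 3 → ((Fin 3 → ZMod 2) → ℚ)) 2 = vec ![1, 0, 0, -1, -1, 0, 0, 1] from rfl] at hc
  simp only [Matrix.cons_val_zero, Matrix.cons_val_one, Matrix.head_cons] at hc
  have h1 := congrFun hc ![0,1,0]
  have h2 := congrFun hc ![0,0,1]
  have h3 := congrFun hc ![0,0,0]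
  simp only [Pi.add_apply, Pi.smul_apply, smul_eq_mul, Pi.zero_apply, val0_000, val0_001, val0_010, val0_011, val0_100, val0_101, val0_110, val0_111, val1_000, val1_001, val1_010, val1_011, val1_100, val1_101, val1_110, val1_111, val2_000, val2_001, val2_010, val2_011, val2_100, val2_101, val2_110, val2_111,
    mul_one, mul_zero, mul_neg, add_zero, zero_add] at h1 h2 h3
  intro i
  fin_cases i <;> simp <;> linarith

/-- The kernel of `B₃` over `ℚ` is 3-dimensional, spanned by the vectors
`(0,0,1,−1,−1,1,0,0)`, `(0,1,0,−1,−1,0,1,0)`, `(1,0,0,−1,−1,0,0,1)`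
(columns ordered by binary counting). -/
theorem stmt_5 :
    Module.finrank ℚ (LinearMap.ker (clawMatrix 3).mulVecLin) = 3 ∧
      LinearMap.ker (clawMatrix 3).mulVecLin =
        Submodule.span ℚ
          {vec ![0, 0, 1, -1, -1, 1, 0, 0],
           vec ![0, 1, 0, -1, -1, 0, 1, 0],
           vec ![1, 0, 0, -1, -1, 0, 0, 1]} := by
  have hker := le_antisymm ker_le_span span_le_ker
  refine ⟨?_, hker⟩
  rw [hker]
  have hrange : Set.range ![vec ![0, 0, 1, -1, -1, 1, 0, 0], vec ![0, 1, 0, -1, -1, 0, 1, 0], vec ![1, 0, 0, -1, -1, 0, 0, 1]] =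
      {vec ![0, 0, 1, -1, -1, 1, 0, 0], vec ![0, 1, 0, -1, -1, 0, 1, 0], vec ![1, 0, 0, -1, -1, 0, 0, 1]} := by
    ext x
    simp [Matrix.range_cons, Matrix.range_empty]
    tauto
  rw [← hrange, finrank_span_eq_card gens_li]
  simp
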